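/- Let N be a binary phylogenetic network with k reticulations 'at the top' (there is a child c of the root, nodes a_i, b_i for i = 1..k with edges (a_i,b_i), edges (c,a_1),(c,b_1), and for each i < k either edges (a_i,a_{i+1}),(b_i,b_{i+1}) or edges (a_i,b_{i+1}),(b_i,a_{i+1})). Then there is a sequence of at most k head moves transforming N into a network in which all k reticulations are neatly at the top (i.e., for each i < k the edges are (a_i,a_{i+1}) and (b_i,b_{i+1})), and this sequence does not alter the subnetwork below a_k and b_k. -/

import Mathlib

noncomputable section

namespace Phylo

/-- In-degree of a vertex in a digraph given by an edge relation. -/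
def indeg {V : Type} (E : V → V → Prop) (v : V) : ℕ := Nat.card {u // E u v}

/-- Out-degree of a vertex in a digraph given by an edge relation. -/
def outdeg {V : Type} (E : V → V → Prop) (v : V) : ℕ := Nat.card {w // E v w}

def IsRoot {V : Type} (E : V → V → Prop) (v : V) : Prop := indeg E v = 0 ∧ outdeg E v = 1
def IsLeafNode {V : Type} (E : V → V → Prop) (v : V) : Prop := indeg E v = 1 ∧ outdeg E v = 0
def IsSplit {V : Type} (E : V → V → Prop) (v : V) : Prop := indeg E v = 1 ∧ outdeg E v = 2
def IsRetic {V : Type} (E : V → V → Prop) (v : V) : Prop := indeg E v = 2 ∧ outdeg E v = 1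

/-- A directed graph is acyclic if no vertex lies on a directed cycle. -/
def Acyclic {V : Type} (E : V → V → Prop) : Prop := ∀ v, ¬ Relation.TransGen E v v

/-- `(V, E)` together with the leaf-labelling `lab : X → V` is a binary phylogenetic
network on leaf set `X`: an acyclic digraph with a unique root (indeg 0, outdeg 1),
leaves (indeg 1, outdeg 0) bijectively labelled by `X`, and all other nodes split
nodes (indeg 1, outdeg 2) or reticulations (indeg 2, outdeg 1). -/
structure IsPhyloNet {V X : Type} [Fintype V] (E : V → V → Prop) (lab : X → V) : Prop where
  acyclic : Acyclic E
  root_unique : ∃! v, IsRoot E v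
  lab_inj : Function.Injective lab
  leaf_iff : ∀ v, IsLeafNode E v ↔ v ∈ Set.range lab
  node_types : ∀ v, IsRoot E v ∨ IsLeafNode E v ∨ IsSplit E v ∨ IsRetic E v

/-- The reticulation number of a digraph. -/
def reticCount {V : Type} (E : V → V → Prop) : ℕ := Nat.card {v // IsRetic E v}

/-- Labelled isomorphism of leaf-labelled digraphs. -/
def LabIso {V V' X : Type} (E : V → V → Prop) (lab : X → V)
    (E' : V' → V' → Prop) (lab' : X → V') : Prop :=
  ∃ φ : V ≃ V', (∀ a b, E a b ↔ E' (φ a) (φ b)) ∧ ∀ x, φ (lab x) = lab' x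

/-- Result of the head move of the edge `(u,v)` to the edge `(s,t)`, where `p` is the
other parent of the reticulation `v` and `c` its child.  The former head `v` is reused
as the node `v'` subdividing `(s,t)`: we delete `(u,v), (p,v), (v,c), (s,t)`, add
`(p,c)` (suppressing `v`), `(s,v), (v,t)` (subdividing `(s,t)` by `v' = v`), and the
new edge `(u,v') = (u,v)`. -/
def headMoveEdges {V : Type} (E : V → V → Prop) (u v p c s t : V) : V → V → Prop :=
  fun a b =>
    (E a b ∧ (a, b) ≠ (p, v) ∧ (a, b) ≠ (v, c) ∧ (a, b) ≠ (s, t) ∧ (a, b) ≠ (u, v))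
      ∨ (a, b) = (p, c) ∨ (a, b) = (s, v) ∨ (a, b) = (v, t) ∨ (a, b) = (u, v)

/-- Result of the tail move of the edge `(u,v)` to the edge `(s,t)`, where `p` is the
parent of the split node `u` and `c` its other child; `u` is reused as the node `u'`
subdividing `(s,t)`. -/
def tailMoveEdges {V : Type} (E : V → V → Prop) (u v p c s t : V) : V → V → Prop :=
  fun a b =>
    (E a b ∧ (a, b) ≠ (p, u) ∧ (a, b) ≠ (u, c) ∧ (a, b) ≠ (s, t) ∧ (a, b) ≠ (u, v))
      ∨ (a, b) = (p, c) ∨ (a, b) = (s, u) ∨ (a, b) = (u, t) ∨ (a, b) = (u, v)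

/-- A leaf-labelled digraph on a finite vertex set, the carrier for phylogenetic
networks on leaf set `X`. -/
structure Net (X : Type) where
  V : Type
  fin : Fintype V
  E : V → V → Prop
  lab : X → V

attribute [instance] Net.fin

/-- `N` is a binary phylogenetic network. -/
def Net.valid {X : Type} (N : Net X) : Prop := IsPhyloNet N.E N.lab

/-- Labelled isomorphism of two leaf-labelled digraphs. -/
def NetIso {X : Type} (N N' : Net X) : Prop := LabIso N.E N.lab N'.E N'.lab

/-- `N'` is obtained from `N` by one valid head move. -/
def HeadMoveStep {X : Type} (N N' : Net X) : Prop :=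
  N.valid ∧ N'.valid ∧ ∃ u v p c s t : N.V,
    N.E u v ∧ N.E p v ∧ p ≠ u ∧ N.E v c ∧ N.E s t ∧
    LabIso (headMoveEdges N.E u v p c s t) N.lab N'.E N'.lab

/-- `N'` is obtained from `N` by one valid tail move. -/
def TailMoveStep {X : Type} (N N' : Net X) : Prop :=
  N.valid ∧ N'.valid ∧ ∃ u v p c s t : N.V,
    N.E u v ∧ N.E p u ∧ N.E u c ∧ c ≠ v ∧ N.E s t ∧
    LabIso (tailMoveEdges N.E u v p c s t) N.lab N'.E N'.lab

/-- The digraph obtained by subdividing the edge `(s,t)` with a fresh node (`none`). -/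
def subdivEdge {V : Type} (E : V → V → Prop) (s t : V) : Option V → Option V → Prop
  | some a, some b => E a b ∧ (a, b) ≠ (s, t)
  | some a, none => a = s
  | none, some b => b = t
  | none, none => False

/-- `N'` is obtained from `N` by one valid distance-`d` head move: after subdividing
the target edge `(s,t)` with a new node `v'`, a shortest path from the old head `v`
to `v'` in the underlying undirected graph has length at most `d + 1`. -/
def HeadMoveStepD {X : Type} (d : ℕ) (N N' : Net X) : Prop :=
  N.valid ∧ N'.valid ∧ ∃ u v p c s t : N.V,
    N.E u v ∧ N.E p v ∧ p ≠ u ∧ N.E v c ∧ N.E s t ∧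
    (SimpleGraph.fromRel (subdivEdge N.E s t)).dist (some v) none ≤ d + 1 ∧
    LabIso (headMoveEdges N.E u v p c s t) N.lab N'.E N'.lab

/-- `N` and `N'` are connected by a finite sequence of `R`-moves (up to labelled
isomorphism, i.e. renaming of vertices). -/
def ConnectedBy {X : Type} (R : Net X → Net X → Prop) (N N' : Net X) : Prop :=
  Relation.ReflTransGen (fun A B => R A B ∨ NetIso A B) N N'

/-- `N'` can be reached from `N` by at most `n` `R`-moves (up to labelled isomorphism). -/
def stepsLE {X : Type} (R : Net X → Net X → Prop) : ℕ → Net X → Net X → Prop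
  | 0, N, N' => NetIso N N'
  | n + 1, N, N' => stepsLE R n N N' ∨ ∃ M, R N M ∧ stepsLE R n M N'

/-- `(V, E)` is a subdivision of `(W, F)` via the injection `φ`: every vertex outside
the image of `φ` is a redundant (indeg 1, outdeg 1) node, and `F a b` holds iff there
is an `E`-path from `φ a` to `φ b` all of whose internal vertices avoid the image. -/
def IsSubdivision {W V : Type} (F : W → W → Prop) (E : V → V → Prop) (φ : W → V) : Prop :=
  Function.Injective φ ∧
  (∀ v, v ∉ Set.range φ → indeg E v = 1 ∧ outdeg E v = 1) ∧
  (∀ a b, F a b ↔ ∃ l : List V,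
      List.Chain E (φ a) (l ++ [φ b]) ∧ ∀ x ∈ l, x ∉ Set.range φ)

/-- A rooted phylogenetic tree on `X`: a phylogenetic network with no reticulations. -/
def IsTree {X : Type} (T : Net X) : Prop := T.valid ∧ reticCount T.E = 0

/-- The tree `T` is embedded in `N`: some `X`-labelled subgraph of `N` is a
subdivision of `T`. -/
def EmbeddedTree {X : Type} (T N : Net X) : Prop :=
  IsTree T ∧ ∃ (E' : N.V → N.V → Prop) (φ : T.V → N.V),
    (∀ a b, E' a b → N.E a b) ∧ IsSubdivision T.E E' φ ∧ ∀ x, φ (T.lab x) = N.lab x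

/-- The digraph contains a triangle `t, s, r` with edges `(t,s), (t,r), (s,r)`. -/
def HasTriangle {V : Type} (E : V → V → Prop) : Prop :=
  ∃ t s r, E t s ∧ E t r ∧ E s r

/-- The network has `k` reticulations at the top, with nodes `c` (child of the root),
`a i`, `b i` for `1 ≤ i ≤ k`. -/
def ReticsAtTop {V : Type} (E : V → V → Prop) (k : ℕ) (c : V) (a b : ℕ → V) : Prop :=
  (∃ ρ, IsRoot E ρ ∧ E ρ c) ∧ E c (a 1) ∧ E c (b 1) ∧
  (∀ i, 1 ≤ i → i ≤ k → E (a i) (b i) ∧ IsSplit E (a i) ∧ IsRetic E (b i)) ∧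
  (∀ i, 1 ≤ i → i < k →
    ((E (a i) (a (i + 1)) ∧ E (b i) (b (i + 1))) ∨
     (E (a i) (b (i + 1)) ∧ E (b i) (a (i + 1)))))

/-- The network has `k` reticulations neatly at the top. -/
def NeatlyAtTop {V : Type} (E : V → V → Prop) (k : ℕ) (c : V) (a b : ℕ → V) : Prop :=
  (∃ ρ, IsRoot E ρ ∧ E ρ c) ∧ E c (a 1) ∧ E c (b 1) ∧
  (∀ i, 1 ≤ i → i ≤ k → E (a i) (b i) ∧ IsSplit E (a i) ∧ IsRetic E (b i)) ∧
  (∀ i, 1 ≤ i → i < k → E (a i) (a (i + 1)) ∧ E (b i) (b (i + 1)))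


/-! ### Auxiliary counting lemmas -/

lemma card_one_unique {V : Type} {P : V → Prop} (h : Nat.card {x // P x} = 1) {z : V} (hz : P z) :
    ∀ y, P y → y = z := by
  obtain ⟨hs, -⟩ := Nat.card_eq_one_iff_unique.mp h
  intro y hy
  exact congrArg Subtype.val (@Subsingleton.elim _ hs ⟨y, hy⟩ ⟨z, hz⟩)

lemma card_eq_one_of_iff {V : Type} {P : V → Prop} {z : V} (h : ∀ y, P y ↔ y = z) :
    Nat.card {x // P x} = 1 := by
  refine Nat.card_eq_one_iff_unique.mpr ⟨⟨?_⟩, ⟨⟨z, (h z).mpr rfl⟩⟩⟩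
  rintro ⟨x, hx⟩ ⟨y, hy⟩
  exact Subtype.ext (((h x).mp hx).trans ((h y).mp hy).symm)

lemma card_eq_two_of_iff {V : Type} [Fintype V] {P : V → Prop} {z w : V} (hzw : z ≠ w)
    (h : ∀ y, P y ↔ y = z ∨ y = w) : Nat.card {x // P x} = 2 := by
  have hs : {x | P x} = ({z, w} : Set V) := by ext x; simp [h x]
  have hc : Nat.card {x // P x} = ({x | P x} : Set V).ncard := Nat.card_coe_set_eq _
  rw [hc, hs, Set.ncard_pair hzw]

lemma card_pair_eq {V : Type} [Fintype V] {P : V → Prop} {z w : V} (hzw : z ≠ w)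
    (h : Nat.card {x // P x} = 2) (hz : P z) (hw : P w) : ∀ y, P y → y = z ∨ y = w := by
  have h2 : ({x | P x} : Set V).ncard = 2 := by rw [← Nat.card_coe_set_eq]; exact h
  have hsub : ({z, w} : Set V) ⊆ {x | P x} := by
    rintro x hx
    rcases hx with rfl | hx
    · exact hz
    · rw [Set.mem_singleton_iff] at hx; subst hx; exact hw
  have heq := Set.eq_of_subset_of_ncard_le hsub (by rw [h2, Set.ncard_pair hzw]) (Set.toFinite _)
  intro y hy
  have : y ∈ ({z, w} : Set V) := by rw [heq]; exact hy
  simpa using this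

lemma exists_second {V : Type} [Fintype V] {P : V → Prop} {z : V}
    (h : Nat.card {x // P x} = 2) (hz : P z) : ∃ w, P w ∧ w ≠ z := by
  by_contra hc
  push_neg at hc
  have h1 : Nat.card {x // P x} = 1 :=
    card_eq_one_of_iff (fun y => ⟨fun hy => hc y hy, fun h' => h' ▸ hz⟩)
  omega

/-! ### Reachability and distinctness in a network with retics at the top -/

section Reach

variable {V : Type} {E : V → V → Prop} {k : ℕ} {c : V} {a b : ℕ → V}

lemma reachA (htop : ReticsAtTop E k c a b) {j : ℕ} (h1 : 1 ≤ j) :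
    ∀ l, j ≤ l → l ≤ k → Relation.ReflTransGen E (a j) (a l) := by
  intro l hjl
  induction l, hjl using Nat.le_induction with
  | base => exact fun _ => Relation.ReflTransGen.refl
  | succ l hjl ih =>
    intro hlk
    have hl1 : 1 ≤ l := h1.trans hjl
    have hlk' : l < k := hlk
    have prev := ih hlk'.le
    rcases htop.2.2.2.2 l hl1 hlk' with ⟨ha, -⟩ | ⟨-, hb⟩
    · exact prev.tail ha
    · exact (prev.tail (htop.2.2.2.1 l hl1 hlk'.le).1).tail hb

lemma reachB (htop : ReticsAtTop E k c a b) {j : ℕ} (h1 : 1 ≤ j) :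
    ∀ l, j ≤ l → l ≤ k → Relation.ReflTransGen E (b j) (b l) := by
  intro l hjl
  induction l, hjl using Nat.le_induction with
  | base => exact fun _ => Relation.ReflTransGen.refl
  | succ l hjl ih =>
    intro hlk
    have hl1 : 1 ≤ l := h1.trans hjl
    have hlk' : l < k := hlk
    have prev := ih hlk'.le
    rcases htop.2.2.2.2 l hl1 hlk' with ⟨-, hb⟩ | ⟨-, hb⟩
    · exact prev.tail hb
    · exact (prev.tail hb).tail (htop.2.2.2.1 (l+1) (by omega) hlk').1

lemma transA (htop : ReticsAtTop E k c a b) {j l : ℕ} (h1 : 1 ≤ j) (hjl : j < l) (hlk : l ≤ k) :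
    Relation.TransGen E (a j) (a l) := by
  have hjk : j < k := lt_of_lt_of_le hjl hlk
  rcases htop.2.2.2.2 j h1 hjk with ⟨ha, -⟩ | ⟨-, hb⟩
  · exact Relation.TransGen.head' ha (reachA htop (by omega) l hjl hlk)
  · exact Relation.TransGen.head' (htop.2.2.2.1 j h1 hjk.le).1
      (Relation.ReflTransGen.head hb (reachA htop (by omega) l hjl hlk))

lemma transB (htop : ReticsAtTop E k c a b) {j l : ℕ} (h1 : 1 ≤ j) (hjl : j < l) (hlk : l ≤ k) :
    Relation.TransGen E (b j) (b l) := by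
  have hjk : j < k := lt_of_lt_of_le hjl hlk
  rcases htop.2.2.2.2 j h1 hjk with ⟨-, hb⟩ | ⟨-, hb⟩
  · exact Relation.TransGen.head' hb (reachB htop (by omega) l hjl hlk)
  · exact Relation.TransGen.head' hb
      (Relation.ReflTransGen.head (htop.2.2.2.1 (j+1) (by omega) hjk).1
        (reachB htop (by omega) l hjl hlk))

lemma ne_ab (htop : ReticsAtTop E k c a b) [Fintype V] {j l : ℕ}
    (hj1 : 1 ≤ j) (hjk : j ≤ k) (hl1 : 1 ≤ l) (hlk : l ≤ k) : a j ≠ b l := by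
  intro h
  have hs : indeg E (a j) = 1 := (htop.2.2.2.1 j hj1 hjk).2.1.1
  have hr : indeg E (b l) = 2 := (htop.2.2.2.1 l hl1 hlk).2.2.1
  rw [h, hr] at hs
  omega

lemma ne_aa (htop : ReticsAtTop E k c a b) (hac : Acyclic E) {j l : ℕ}
    (hj1 : 1 ≤ j) (hjk : j ≤ k) (hl1 : 1 ≤ l) (hlk : l ≤ k) (hjl : j ≠ l) : a j ≠ a l := by
  intro h
  rcases Nat.lt_or_ge j l with hlt | hge
  · exact hac _ (h ▸ transA htop hj1 hlt hlk)
  · exact hac _ (h.symm ▸ transA htop hl1 (by omega) hjk)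

lemma ne_bb (htop : ReticsAtTop E k c a b) (hac : Acyclic E) {j l : ℕ}
    (hj1 : 1 ≤ j) (hjk : j ≤ k) (hl1 : 1 ≤ l) (hlk : l ≤ k) (hjl : j ≠ l) : b j ≠ b l := by
  intro h
  rcases Nat.lt_or_ge j l with hlt | hge
  · exact hac _ (h ▸ transB htop hj1 hlt hlk)
  · exact hac _ (h.symm ▸ transB htop hl1 (by omega) hjk)

end Reach
/-! ### The single redirecting head move -/

lemma move_lemma {V X : Type} [Fintype V] {E : V → V → Prop} {k : ℕ} {c : V} {a b : ℕ → V}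
    (lab : X → V) (hphy : IsPhyloNet E lab) (htop : ReticsAtTop E k c a b)
    {i : ℕ} (h1 : 1 ≤ i) (hik : i < k)
    (hx1 : E (a i) (b (i+1))) (hx2 : E (b i) (a (i+1))) :
    ∃ E' : V → V → Prop,
      (∃ u v p c' s t : V, E u v ∧ E p v ∧ p ≠ u ∧ E v c' ∧ E s t ∧
        E' = headMoveEdges E u v p c' s t) ∧
      IsPhyloNet E' lab ∧ ReticsAtTop E' k c a b ∧
      (E' (a i) (a (i+1)) ∧ E' (b i) (b (i+1))) ∧
      (∀ j, 1 ≤ j → j < k → j ≠ i →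
        ((E' (a j) (a (j+1)) ∧ E' (b j) (b (j+1))) ↔ (E (a j) (a (j+1)) ∧ E (b j) (b (j+1))))) ∧
      (∀ w, Relation.ReflTransGen E (a k) w ↔ Relation.ReflTransGen E' (a k) w) ∧
      (∀ w z, Relation.ReflTransGen E (a k) w → (E w z ↔ E' w z)) := by
  have hac := hphy.acyclic
  have hlev := htop.2.2.2.1
  have hli := hlev i h1 hik.le
  have hli1 := hlev (i+1) (by omega) hik
  -- distinctness
  have dAB : a i ≠ b i := ne_ab htop h1 hik.le h1 hik.le
  have dAB' : a i ≠ b (i+1) := ne_ab htop h1 hik.le (by omega) hik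
  have dA'B : a (i+1) ≠ b i := ne_ab htop (by omega) hik h1 hik.le
  have dA'B' : a (i+1) ≠ b (i+1) := ne_ab htop (by omega) hik (by omega) hik
  have dAA' : a i ≠ a (i+1) := ne_aa htop hac h1 hik.le (by omega) hik (by omega)
  have dBB' : b i ≠ b (i+1) := ne_bb htop hac h1 hik.le (by omega) hik (by omega)
  -- the second parent u of b i
  obtain ⟨u, huB, huA⟩ : ∃ u, E u (b i) ∧ u ≠ a i := exists_second hli.2.2.1 hli.1
  -- neighbourhood determinations
  have houtA : ∀ y, E (a i) y ↔ (y = b i ∨ y = b (i+1)) := by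
    intro y
    constructor
    · intro hy; exact card_pair_eq dBB' hli.2.1.2 hli.1 hx1 y hy
    · rintro (rfl | rfl); exacts [hli.1, hx1]
  have houtB : ∀ y, E (b i) y ↔ y = a (i+1) := by
    intro y
    exact ⟨fun hy => card_one_unique hli.2.2.2 hx2 y hy, fun h => h ▸ hx2⟩
  have hinA' : ∀ x, E x (a (i+1)) ↔ x = b i := by
    intro x
    exact ⟨fun hy => card_one_unique hli1.2.1.1 hx2 x hy, fun h => h ▸ hx2⟩
  have hinB' : ∀ x, E x (b (i+1)) ↔ (x = a i ∨ x = a (i+1)) := by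
    intro x
    constructor
    · intro hy; exact card_pair_eq dAA' hli1.2.2.1 hx1 hli1.1 x hy
    · rintro (rfl | rfl); exacts [hx1, hli1.1]
  set E' : V → V → Prop := headMoveEdges E u (b i) (a i) (a (i+1)) (a i) (b (i+1)) with hE'
  -- the key characterisation of E'
  have hchar : ∀ x y, E' x y ↔
      ((x = a i ∧ y = a (i+1)) ∨ (x = b i ∧ y = b (i+1)) ∨
        (E x y ∧ ¬(x = b i ∧ y = a (i+1)) ∧ ¬(x = a i ∧ y = b (i+1)))) := by
    intro x y
    rw [hE']
    show ((E x y ∧ (x, y) ≠ (a i, b i) ∧ (x, y) ≠ (b i, a (i+1)) ∧ (x, y) ≠ (a i, b (i+1)) ∧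
        (x, y) ≠ (u, b i)) ∨ (x, y) = (a i, a (i+1)) ∨ (x, y) = (a i, b i) ∨
        (x, y) = (b i, b (i+1)) ∨ (x, y) = (u, b i)) ↔ _
    simp only [ne_eq, Prod.mk.injEq]
    constructor
    · rintro (⟨hE, h1', h2', h3', h4'⟩ | ⟨rfl, rfl⟩ | ⟨rfl, rfl⟩ | ⟨rfl, rfl⟩ | ⟨rfl, rfl⟩)
      · exact Or.inr (Or.inr ⟨hE, h2', h3'⟩)
      · exact Or.inl ⟨rfl, rfl⟩
      · exact Or.inr (Or.inr ⟨hli.1, fun h => dAB h.1, fun h => dBB' h.2⟩)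
      · exact Or.inr (Or.inl ⟨rfl, rfl⟩)
      · exact Or.inr (Or.inr ⟨huB, fun h => dA'B h.2.symm, fun h => dBB' h.2⟩)
    · rintro (⟨rfl, rfl⟩ | ⟨rfl, rfl⟩ | ⟨hE, h2', h3'⟩)
      · exact Or.inr (Or.inl ⟨rfl, rfl⟩)
      · exact Or.inr (Or.inr (Or.inr (Or.inl ⟨rfl, rfl⟩)))
      · by_cases hc1 : x = a i ∧ y = b i
        · obtain ⟨rfl, rfl⟩ := hc1
          exact Or.inr (Or.inr (Or.inl ⟨rfl, rfl⟩))
        · by_cases hc2 : x = u ∧ y = b i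
          · obtain ⟨rfl, rfl⟩ := hc2
            exact Or.inr (Or.inr (Or.inr (Or.inr ⟨rfl, rfl⟩)))
          · exact Or.inl ⟨hE, hc1, h2', h3', hc2⟩
  -- degrees are preserved
  have hdeg : ∀ v, indeg E' v = indeg E v ∧ outdeg E' v = outdeg E v := by
    intro v
    constructor
    · by_cases hv1 : v = a (i+1)
      · subst hv1
        rw [show indeg E (a (i+1)) = 1 from hli1.2.1.1]
        apply card_eq_one_of_iff
        intro x
        rw [hchar x (a (i+1))]
        constructor
        · rintro (⟨rfl, -⟩ | ⟨rfl, h⟩ | ⟨hE, hn, -⟩)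
          · rfl
          · exact absurd h dA'B'
          · exact absurd ((hinA' x).mp hE) (fun hxx => hn ⟨hxx, rfl⟩)
        · rintro rfl; exact Or.inl ⟨rfl, rfl⟩
      · by_cases hv2 : v = b (i+1)
        · subst hv2
          rw [show indeg E (b (i+1)) = 2 from hli1.2.2.1]
          apply card_eq_two_of_iff (z := b i) (w := a (i+1)) dA'B.symm
          intro x
          rw [hchar x (b (i+1))]
          constructor
          · rintro (⟨-, h⟩ | ⟨rfl, -⟩ | ⟨hE, -, hn⟩)
            · exact absurd h.symm dA'B'
            · exact Or.inl rfl
            · rcases (hinB' x).mp hE with rfl | rfl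
              · exact absurd ⟨rfl, rfl⟩ hn
              · exact Or.inr rfl
          · rintro (rfl | rfl)
            · exact Or.inr (Or.inl ⟨rfl, rfl⟩)
            · exact Or.inr (Or.inr ⟨hli1.1, fun h => dA'B h.1, fun h => dAA' h.1.symm⟩)
        · apply Nat.card_congr
          apply Equiv.subtypeEquivRight
          intro x
          rw [hchar x v]
          constructor
          · rintro (⟨-, h⟩ | ⟨-, h⟩ | ⟨hE, -, -⟩)
            · exact absurd h hv1
            · exact absurd h hv2
            · exact hE
          · intro hE
            exact Or.inr (Or.inr ⟨hE, fun h => hv1 h.2, fun h => hv2 h.2⟩)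
    · by_cases hv1 : v = a i
      · subst hv1
        rw [show outdeg E (a i) = 2 from hli.2.1.2]
        apply card_eq_two_of_iff (z := a (i+1)) (w := b i) dA'B
        intro y
        rw [hchar (a i) y]
        constructor
        · rintro (⟨-, rfl⟩ | ⟨h, -⟩ | ⟨hE, -, hn⟩)
          · exact Or.inl rfl
          · exact absurd h dAB
          · rcases (houtA y).mp hE with rfl | rfl
            · exact Or.inr rfl
            · exact absurd ⟨rfl, rfl⟩ hn
        · rintro (rfl | rfl)
          · exact Or.inl ⟨rfl, rfl⟩
          · exact Or.inr (Or.inr ⟨hli.1, fun h => dAB h.1, fun h => dBB' h.2⟩)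
      · by_cases hv2 : v = b i
        · subst hv2
          rw [show outdeg E (b i) = 1 from hli.2.2.2]
          apply card_eq_one_of_iff
          intro y
          rw [hchar (b i) y]
          constructor
          · rintro (⟨h, -⟩ | ⟨-, rfl⟩ | ⟨hE, hn, -⟩)
            · exact absurd h.symm dAB
            · rfl
            · exact absurd ((houtB y).mp hE) (fun hxx => hn ⟨rfl, hxx⟩)
          · rintro rfl; exact Or.inr (Or.inl ⟨rfl, rfl⟩)
        · apply Nat.card_congr
          apply Equiv.subtypeEquivRight
          intro y
          rw [hchar v y]
          constructor
          · rintro (⟨h, -⟩ | ⟨h, -⟩ | ⟨hE, -, -⟩)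
            · exact absurd h hv1
            · exact absurd h hv2
            · exact hE
          · intro hE
            exact Or.inr (Or.inr ⟨hE, fun h => hv2 h.1, fun h => hv1 h.1⟩)
  -- acyclicity
  have hsub : ∀ x y, E' x y → Relation.TransGen E x y := by
    intro x y h
    rw [hchar] at h
    rcases h with ⟨rfl, rfl⟩ | ⟨rfl, rfl⟩ | ⟨hE, -, -⟩
    · exact Relation.TransGen.head hli.1 (Relation.TransGen.single hx2)
    · exact Relation.TransGen.head hx2 (Relation.TransGen.single hli1.1)
    · exact Relation.TransGen.single hE
  have hac' : Acyclic E' := by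
    intro v hv
    have h2 := Relation.TransGen.mono hsub _ _ hv
    rw [Relation.transGen_idem] at h2
    exact hac v h2
  -- node-type transfer
  have hroot_iff : ∀ v, IsRoot E' v ↔ IsRoot E v := by
    intro v; unfold IsRoot; rw [(hdeg v).1, (hdeg v).2]
  have hleaf_iff : ∀ v, IsLeafNode E' v ↔ IsLeafNode E v := by
    intro v; unfold IsLeafNode; rw [(hdeg v).1, (hdeg v).2]
  have hsplit_iff : ∀ v, IsSplit E' v ↔ IsSplit E v := by
    intro v; unfold IsSplit; rw [(hdeg v).1, (hdeg v).2]
  have hretic_iff : ∀ v, IsRetic E' v ↔ IsRetic E v := by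
    intro v; unfold IsRetic; rw [(hdeg v).1, (hdeg v).2]
  have hphy' : IsPhyloNet E' lab := by
    refine ⟨hac', ?_, hphy.lab_inj, ?_, ?_⟩
    · obtain ⟨ρ, hρ, huniq⟩ := hphy.root_unique
      exact ⟨ρ, (hroot_iff ρ).mpr hρ, fun y hy => huniq y ((hroot_iff y).mp hy)⟩
    · intro v; rw [hleaf_iff v]; exact hphy.leaf_iff v
    · intro v
      rcases hphy.node_types v with h | h | h | h
      · exact Or.inl ((hroot_iff v).mpr h)
      · exact Or.inr (Or.inl ((hleaf_iff v).mpr h))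
      · exact Or.inr (Or.inr (Or.inl ((hsplit_iff v).mpr h)))
      · exact Or.inr (Or.inr (Or.inr ((hretic_iff v).mpr h)))
  -- new straight edges at level i
  have hstir : E' (a i) (a (i+1)) ∧ E' (b i) (b (i+1)) := by
    constructor
    · exact (hchar _ _).mpr (Or.inl ⟨rfl, rfl⟩)
    · exact (hchar _ _).mpr (Or.inr (Or.inl ⟨rfl, rfl⟩))
  -- retics at top for E'
  have htop' : ReticsAtTop E' k c a b := by
    obtain ⟨ρ, hρroot, hρc⟩ := htop.1
    have hca := htop.2.1
    have hcb := htop.2.2.1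
    have hcfg := htop.2.2.2.2
    refine ⟨⟨ρ, (hroot_iff ρ).mpr hρroot, ?_⟩, ?_, ?_, ?_, ?_⟩
    · refine (hchar _ _).mpr (Or.inr (Or.inr ⟨hρc, ?_, ?_⟩))
      · rintro ⟨rfl, -⟩
        have := hρroot.1
        rw [hli.2.2.1] at this
        omega
      · rintro ⟨rfl, -⟩
        have := hρroot.1
        rw [hli.2.1.1] at this
        omega
    · refine (hchar _ _).mpr (Or.inr (Or.inr ⟨hca, ?_, ?_⟩))
      · rintro ⟨-, h⟩
        exact ne_aa htop hac le_rfl (by omega : 1 ≤ k) (by omega) hik (by omega) h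
      · rintro ⟨-, h⟩
        exact ne_ab htop le_rfl (by omega : 1 ≤ k) (by omega) hik h
    · refine (hchar _ _).mpr (Or.inr (Or.inr ⟨hcb, ?_, ?_⟩))
      · rintro ⟨-, h⟩
        exact (ne_ab htop (by omega) hik le_rfl (by omega : 1 ≤ k)) h.symm
      · rintro ⟨-, h⟩
        exact ne_bb htop hac le_rfl (by omega : 1 ≤ k) (by omega) hik (by omega) h
    · intro j hj1 hjk
      refine ⟨?_, (hsplit_iff _).mpr (hlev j hj1 hjk).2.1, (hretic_iff _).mpr (hlev j hj1 hjk).2.2⟩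
      refine (hchar _ _).mpr (Or.inr (Or.inr ⟨(hlev j hj1 hjk).1, ?_, ?_⟩))
      · rintro ⟨h, -⟩
        exact ne_ab htop hj1 hjk h1 hik.le h
      · by_cases hji : j = i+1
        · subst hji
          rintro ⟨h, -⟩
          exact dAA' h.symm
        · rintro ⟨-, h⟩
          exact ne_bb htop hac hj1 hjk (by omega) hik hji h
    · intro j hj1 hjk
      by_cases hji : j = i
      · subst hji
        exact Or.inl hstir
      · rcases hcfg j hj1 hjk with ⟨ha', hb'⟩ | ⟨ha', hb'⟩
        · refine Or.inl ⟨?_, ?_⟩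
          · refine (hchar _ _).mpr (Or.inr (Or.inr ⟨ha', ?_, ?_⟩))
            · rintro ⟨h, -⟩
              exact ne_ab htop hj1 hjk.le h1 hik.le h
            · rintro ⟨h, -⟩
              exact ne_aa htop hac hj1 hjk.le h1 hik.le hji h
          · refine (hchar _ _).mpr (Or.inr (Or.inr ⟨hb', ?_, ?_⟩))
            · rintro ⟨h, -⟩
              exact ne_bb htop hac hj1 hjk.le h1 hik.le hji h
            · rintro ⟨h, -⟩
              exact (ne_ab htop h1 hik.le hj1 hjk.le) h.symm
        · refine Or.inr ⟨?_, ?_⟩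
          · refine (hchar _ _).mpr (Or.inr (Or.inr ⟨ha', ?_, ?_⟩))
            · rintro ⟨h, -⟩
              exact ne_ab htop hj1 hjk.le h1 hik.le h
            · rintro ⟨h, -⟩
              exact ne_aa htop hac hj1 hjk.le h1 hik.le hji h
          · refine (hchar _ _).mpr (Or.inr (Or.inr ⟨hb', ?_, ?_⟩))
            · rintro ⟨h, -⟩
              exact ne_bb htop hac hj1 hjk.le h1 hik.le hji h
            · rintro ⟨h, -⟩
              exact (ne_ab htop h1 hik.le hj1 hjk.le) h.symm
  -- straightness at other levels is unchanged
  have hother : ∀ j, 1 ≤ j → j < k → j ≠ i →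
      ((E' (a j) (a (j+1)) ∧ E' (b j) (b (j+1))) ↔ (E (a j) (a (j+1)) ∧ E (b j) (b (j+1)))) := by
    intro j hj1 hjk hji
    constructor
    · rintro ⟨hEa, hEb⟩
      rw [hchar] at hEa hEb
      constructor
      · rcases hEa with ⟨h, -⟩ | ⟨h, -⟩ | ⟨hE, -, -⟩
        · exact absurd h (ne_aa htop hac hj1 hjk.le h1 hik.le hji)
        · exact absurd h (ne_ab htop hj1 hjk.le h1 hik.le)
        · exact hE
      · rcases hEb with ⟨h, -⟩ | ⟨h, -⟩ | ⟨hE, -, -⟩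
        · exact absurd h.symm (ne_ab htop h1 hik.le hj1 hjk.le)
        · exact absurd h (ne_bb htop hac hj1 hjk.le h1 hik.le hji)
        · exact hE
    · rintro ⟨hEa, hEb⟩
      constructor
      · refine (hchar _ _).mpr (Or.inr (Or.inr ⟨hEa, ?_, ?_⟩))
        · rintro ⟨h, -⟩
          exact ne_ab htop hj1 hjk.le h1 hik.le h
        · rintro ⟨h, -⟩
          exact ne_aa htop hac hj1 hjk.le h1 hik.le hji h
      · refine (hchar _ _).mpr (Or.inr (Or.inr ⟨hEb, ?_, ?_⟩))
        · rintro ⟨h, -⟩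
          exact ne_bb htop hac hj1 hjk.le h1 hik.le hji h
        · rintro ⟨h, -⟩
          exact (ne_ab htop h1 hik.le hj1 hjk.le) h.symm
  -- the two moved sources are not below (a k)
  have hnotin : ∀ x, (x = a i ∨ x = b i) → ¬ Relation.ReflTransGen E (a k) x := by
    have tA : Relation.TransGen E (a i) (a k) :=
      Relation.TransGen.head' hli.1
        (Relation.ReflTransGen.head hx2 (reachA htop (by omega) k (by omega) le_rfl))
    have tB : Relation.TransGen E (b i) (a k) :=
      Relation.TransGen.head' hx2 (reachA htop (by omega) k (by omega) le_rfl)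
    rintro x (rfl | rfl) hr
    · exact hac _ (Relation.TransGen.trans_right hr tA)
    · exact hac _ (Relation.TransGen.trans_right hr tB)
  have hset : ∀ w, Relation.ReflTransGen E (a k) w ↔ Relation.ReflTransGen E' (a k) w := by
    intro w
    constructor
    · intro h
      induction h with
      | refl => exact Relation.ReflTransGen.refl
      | tail hpre hstep ih =>
        refine ih.tail ?_
        refine (hchar _ _).mpr (Or.inr (Or.inr ⟨hstep, ?_, ?_⟩))
        · rintro ⟨rfl, -⟩
          exact hnotin _ (Or.inr rfl) hpre
        · rintro ⟨rfl, -⟩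
          exact hnotin _ (Or.inl rfl) hpre
    · intro h
      induction h with
      | refl => exact Relation.ReflTransGen.refl
      | tail hpre hstep ih =>
        refine ih.tail ?_
        rcases (hchar _ _).mp hstep with ⟨rfl, rfl⟩ | ⟨rfl, rfl⟩ | ⟨hE, -, -⟩
        · exact absurd ih (hnotin _ (Or.inl rfl))
        · exact absurd ih (hnotin _ (Or.inr rfl))
        · exact hE
  have hedge : ∀ w z, Relation.ReflTransGen E (a k) w → (E w z ↔ E' w z) := by
    intro w z hw
    constructor
    · intro hE
      refine (hchar _ _).mpr (Or.inr (Or.inr ⟨hE, ?_, ?_⟩))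
      · rintro ⟨rfl, -⟩
        exact hnotin _ (Or.inr rfl) hw
      · rintro ⟨rfl, -⟩
        exact hnotin _ (Or.inl rfl) hw
    · intro hE
      rcases (hchar _ _).mp hE with ⟨rfl, rfl⟩ | ⟨rfl, rfl⟩ | ⟨hE', -, -⟩
      · exact absurd hw (hnotin _ (Or.inl rfl))
      · exact absurd hw (hnotin _ (Or.inr rfl))
      · exact hE'
  exact ⟨E', ⟨u, b i, a i, a (i+1), a i, b (i+1), huB, hli.1, fun h => huA h.symm, hx2, hx1, rfl⟩,
    hphy', htop', hstir, hother, hset, hedge⟩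
/-! ### Iterating the moves -/

lemma netIso_refl {X : Type} (N : Net X) : NetIso N N :=
  ⟨Equiv.refl _, fun _ _ => Iff.rfl, fun _ => rfl⟩

lemma stepsLE_of_iso {X : Type} {R : Net X → Net X → Prop} {N N' : Net X}
    (h : NetIso N N') : ∀ n, stepsLE R n N N'
  | 0 => h
  | n + 1 => Or.inl (stepsLE_of_iso h n)

lemma main_ind {V X : Type} [Fintype V] (lab : X → V) (k : ℕ) (_hk : 1 ≤ k) (c : V)
    (a b : ℕ → V) :
    ∀ (m : ℕ) (E : V → V → Prop) (S : Finset ℕ),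
      S.card ≤ m →
      (∀ j, 1 ≤ j → j < k → ¬(E (a j) (a (j+1)) ∧ E (b j) (b (j+1))) → j ∈ S) →
      IsPhyloNet E lab → ReticsAtTop E k c a b →
      ∃ E' : V → V → Prop,
        stepsLE HeadMoveStep m ⟨V, inferInstance, E, lab⟩ ⟨V, inferInstance, E', lab⟩ ∧
        IsPhyloNet E' lab ∧ NeatlyAtTop E' k c a b ∧
        (∀ w, Relation.ReflTransGen E (a k) w ↔ Relation.ReflTransGen E' (a k) w) ∧
        (∀ w z, Relation.ReflTransGen E (a k) w → (E w z ↔ E' w z)) := by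
  intro m
  induction m with
  | zero =>
    intro E S hS hcov hphy htop
    refine ⟨E, netIso_refl _, hphy, ?_, fun _ => Iff.rfl, fun _ _ _ => Iff.rfl⟩
    refine ⟨htop.1, htop.2.1, htop.2.2.1, htop.2.2.2.1, ?_⟩
    intro j hj1 hjk
    by_contra hbad
    have hj : j ∈ S := hcov j hj1 hjk hbad
    have : S = ∅ := Finset.card_eq_zero.mp (Nat.le_zero.mp hS)
    rw [this] at hj
    exact absurd hj (Finset.notMem_empty j)
  | succ m ih =>
    intro E S hS hcov hphy htop
    by_cases hall : ∀ j, 1 ≤ j → j < k → (E (a j) (a (j+1)) ∧ E (b j) (b (j+1)))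
    · refine ⟨E, stepsLE_of_iso (netIso_refl _) (m+1), hphy, ?_, fun _ => Iff.rfl,
        fun _ _ _ => Iff.rfl⟩
      exact ⟨htop.1, htop.2.1, htop.2.2.1, htop.2.2.2.1, hall⟩
    · push_neg at hall
      obtain ⟨i, hi1, hik, hbad0⟩ := hall
      have hbad : ¬(E (a i) (a (i+1)) ∧ E (b i) (b (i+1))) := fun h => hbad0 h.1 h.2
      have hcross : E (a i) (b (i+1)) ∧ E (b i) (a (i+1)) := by
        rcases htop.2.2.2.2 i hi1 hik with h | h
        · exact absurd h hbad
        · exact h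
      obtain ⟨E₁, ⟨u, v, p, c', s, t, heu, hep, hpu, hec, hest, hE₁⟩, hphy₁, htop₁, hstir,
        hother, hset₁, hedge₁⟩ := move_lemma lab hphy htop hi1 hik hcross.1 hcross.2
      have hiS : i ∈ S := hcov i hi1 hik hbad
      have hcard : (S.erase i).card ≤ m := by
        have := Finset.card_erase_of_mem hiS
        omega
      have hcov₁ : ∀ j, 1 ≤ j → j < k →
          ¬(E₁ (a j) (a (j+1)) ∧ E₁ (b j) (b (j+1))) → j ∈ S.erase i := by
        intro j hj1 hjk hbad₁
        have hji : j ≠ i := by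
          rintro rfl
          exact hbad₁ hstir
        refine Finset.mem_erase.mpr ⟨hji, hcov j hj1 hjk ?_⟩
        intro hstr
        exact hbad₁ ((hother j hj1 hjk hji).mpr hstr)
      obtain ⟨E', hsteps, hphy', hneat, hset, hedge⟩ :=
        ih E₁ (S.erase i) hcard hcov₁ hphy₁ htop₁
      refine ⟨E', Or.inr ⟨⟨V, inferInstance, E₁, lab⟩, ?_, hsteps⟩, hphy', hneat,
        fun w => (hset₁ w).trans (hset w),
        fun w z hw => (hedge₁ w z hw).trans (hedge w z ((hset₁ w).mp hw))⟩
      refine ⟨hphy, hphy₁, u, v, p, c', s, t, heu, hep, hpu, hec, hest,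
        ⟨Equiv.refl V, fun x y => ?_, fun _ => rfl⟩⟩
      rw [hE₁]
      rfl
/-- a network with `k` reticulations at the top can be transformed by
at most `k` head moves into a network with the `k` reticulations neatly at the top,
without altering the subnetwork below `a k` and `b k`. -/
theorem redirect_top_retics {X : Type} (N : Net X) (k : ℕ) (hk : 1 ≤ k)
    (c : N.V) (a b : ℕ → N.V) (hN : N.valid) (htop : ReticsAtTop N.E k c a b) :
    ∃ (N' : Net X) (c' : N'.V) (a' b' : ℕ → N'.V),
      stepsLE HeadMoveStep k N N' ∧ N'.valid ∧ NeatlyAtTop N'.E k c' a' b' ∧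
      ∃ ψ : {w : N.V // Relation.ReflTransGen N.E (a k) w ∨ Relation.ReflTransGen N.E (b k) w}
          ≃ {w : N'.V // Relation.ReflTransGen N'.E (a' k) w ∨ Relation.ReflTransGen N'.E (b' k) w},
        (∀ w z : {w : N.V // Relation.ReflTransGen N.E (a k) w ∨ Relation.ReflTransGen N.E (b k) w},
          N.E w.1 z.1 ↔ N'.E (ψ w).1 (ψ z).1) ∧
        ∀ (x : X) (hx : Relation.ReflTransGen N.E (a k) (N.lab x) ∨
            Relation.ReflTransGen N.E (b k) (N.lab x)),
          (ψ ⟨N.lab x, hx⟩).1 = N'.lab x := by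
  obtain ⟨E', hsteps, hphy', hneat, hset, hedge⟩ :=
    main_ind N.lab k hk c a b k N.E (Finset.Ico 1 k)
      (by rw [Nat.card_Ico]; omega) (fun j h1 h2 _ => Finset.mem_Ico.mpr ⟨h1, h2⟩) hN htop
  refine ⟨⟨N.V, N.fin, E', N.lab⟩, c, a, b, hsteps, hphy', hneat, ?_⟩
  have hEab : N.E (a k) (b k) := (htop.2.2.2.1 k hk le_rfl).1
  have hEab' : E' (a k) (b k) := (hneat.2.2.2.1 k hk le_rfl).1
  have hPP : ∀ w, (Relation.ReflTransGen N.E (a k) w ∨ Relation.ReflTransGen N.E (b k) w) ↔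
      (Relation.ReflTransGen E' (a k) w ∨ Relation.ReflTransGen E' (b k) w) := by
    intro w
    constructor
    · rintro (h | h)
      · exact Or.inl ((hset w).mp h)
      · exact Or.inl ((hset w).mp (Relation.ReflTransGen.head hEab h))
    · rintro (h | h)
      · exact Or.inl ((hset w).mpr h)
      · exact Or.inl ((hset w).mpr (Relation.ReflTransGen.head hEab' h))
  refine ⟨Equiv.subtypeEquiv (Equiv.refl N.V) (fun w => hPP w), ?_, ?_⟩
  · intro w z
    have hw : Relation.ReflTransGen N.E (a k) w.1 := by
      rcases w.2 with h | h
      · exact h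
      · exact Relation.ReflTransGen.head hEab h
    exact hedge w.1 z.1 hw
  · intro x hx
    rfl

end Phylo
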